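/- For every integer n ≥ 1, κ_{2n−1}² = [a_n² + b_n²(1 + β_n²)]^{−1}. -/

import Mathlib

open MeasureTheory Complex Filter

noncomputable section

/-- The Laurent "cosine" `(z^n + z^(-n))/2`, equal to `cos (n θ)` for `z = e^(iθ)`. -/
def cosL (n : ℕ) (z : ℂ) : ℂ := (z ^ n + (z ^ n)⁻¹) / 2

/-- The Laurent "sine" `(z^n - z^(-n))/(2 i)`, equal to `sin (n θ)` for `z = e^(iθ)`. -/
def sinL (n : ℕ) (z : ℂ) : ℂ := (z ^ n - (z ^ n)⁻¹) / (2 * I)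

/-- The real pairing `⟨f, g⟩_R = ∫ f g dμ`. -/
def innR (μ : Measure ℂ) (f g : ℂ → ℂ) : ℂ := ∫ τ, f τ * g τ ∂μ

section Helpers


lemma cos_add_I_sin (k : ℕ) {z : ℂ} (hz : z ≠ 0) : cosL k z + I * sinL k z = z ^ k := by
  have h : z ^ k ≠ 0 := pow_ne_zero _ hz
  unfold cosL sinL
  field_simp
  ring

lemma cos_sub_I_sin (k : ℕ) {z : ℂ} (hz : z ≠ 0) : cosL k z - I * sinL k z = (z ^ k)⁻¹ := by
  have h : z ^ k ≠ 0 := pow_ne_zero _ hz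
  unfold cosL sinL
  field_simp
  ring

lemma conj_cosL {z : ℂ} (hz : ‖z‖ = 1) (k : ℕ) :
    (starRingEnd ℂ) (cosL k z) = cosL k z := by
  have hzk : ‖z ^ k‖ = 1 := by rw [norm_pow, hz, one_pow]
  have h1 : (starRingEnd ℂ) (z ^ k) = (z ^ k)⁻¹ := (Complex.inv_eq_conj hzk).symm
  have h2 : (starRingEnd ℂ) ((z ^ k)⁻¹) = z ^ k := by rw [map_inv₀, h1, inv_inv]
  simp only [cosL, map_div₀, map_add, h1, h2, map_ofNat]
  ring

lemma conj_sinL {z : ℂ} (hz : ‖z‖ = 1) (k : ℕ) :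
    (starRingEnd ℂ) (sinL k z) = sinL k z := by
  have hzk : ‖z ^ k‖ = 1 := by rw [norm_pow, hz, one_pow]
  have h1 : (starRingEnd ℂ) (z ^ k) = (z ^ k)⁻¹ := (Complex.inv_eq_conj hzk).symm
  have h2 : (starRingEnd ℂ) ((z ^ k)⁻¹) = z ^ k := by rw [map_inv₀, h1, inv_inv]
  simp only [sinL, map_div₀, map_sub, map_mul, h1, h2, Complex.conj_I, map_ofNat]
  ring

/-- A.e. strongly measurable and a.e. bounded. -/
def Bdd (μ : Measure ℂ) (F : ℂ → ℂ) : Prop :=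
  AEStronglyMeasurable F μ ∧ ∃ C : ℝ, ∀ᵐ z ∂μ, ‖F z‖ ≤ C

namespace Bdd

variable {μ : Measure ℂ} {F G : ℂ → ℂ}

lemma integrable [IsFiniteMeasure μ] (h : Bdd μ F) : Integrable F μ := by
  obtain ⟨hm, C, hC⟩ := h
  exact (integrable_const C).mono' hm hC

lemma congr (h : Bdd μ F) (he : F =ᵐ[μ] G) : Bdd μ G := by
  obtain ⟨hm, C, hC⟩ := h
  refine ⟨hm.congr he, C, ?_⟩
  filter_upwards [hC, he] with z h1 h2
  rw [← h2]; exact h1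

lemma const (c : ℂ) : Bdd μ (fun _ => c) :=
  ⟨aestronglyMeasurable_const, ‖c‖, ae_of_all _ fun _ => le_rfl⟩

lemma add (hF : Bdd μ F) (hG : Bdd μ G) : Bdd μ (fun z => F z + G z) := by
  obtain ⟨hm1, C1, hC1⟩ := hF
  obtain ⟨hm2, C2, hC2⟩ := hG
  refine ⟨hm1.add hm2, C1 + C2, ?_⟩
  filter_upwards [hC1, hC2] with z h1 h2
  exact (norm_add_le _ _).trans (add_le_add h1 h2)

lemma sub (hF : Bdd μ F) (hG : Bdd μ G) : Bdd μ (fun z => F z - G z) := by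
  obtain ⟨hm1, C1, hC1⟩ := hF
  obtain ⟨hm2, C2, hC2⟩ := hG
  refine ⟨hm1.sub hm2, C1 + C2, ?_⟩
  filter_upwards [hC1, hC2] with z h1 h2
  exact (norm_sub_le _ _).trans (add_le_add h1 h2)

lemma mul (hF : Bdd μ F) (hG : Bdd μ G) : Bdd μ (fun z => F z * G z) := by
  obtain ⟨hm1, C1, hC1⟩ := hF
  obtain ⟨hm2, C2, hC2⟩ := hG
  refine ⟨hm1.mul hm2, C1 * C2, ?_⟩
  filter_upwards [hC1, hC2] with z h1 h2
  rw [norm_mul]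
  exact mul_le_mul h1 h2 (norm_nonneg _) ((norm_nonneg _).trans h1)

lemma const_mul (hF : Bdd μ F) (c : ℂ) : Bdd μ (fun z => c * F z) :=
  (const c).mul hF

lemma conj (hF : Bdd μ F) : Bdd μ (fun z => (starRingEnd ℂ) (F z)) := by
  obtain ⟨hm, C, hC⟩ := hF
  refine ⟨Complex.continuous_conj.comp_aestronglyMeasurable hm, C, ?_⟩
  filter_upwards [hC] with z h1
  rwa [RCLike.norm_conj]

lemma finsetSum {ι : Type*} {s : Finset ι} {F : ι → ℂ → ℂ}
    (h : ∀ i ∈ s, Bdd μ (F i)) : Bdd μ (fun z => ∑ i ∈ s, F i z) := by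
  classical
  induction s using Finset.cons_induction with
  | empty => simpa using const 0
  | cons i s his ih =>
      simp only [Finset.sum_cons]
      exact (h i (Finset.mem_cons_self i s)).add
        (ih fun j hj => h j (Finset.mem_cons_of_mem hj))

end Bdd

variable {μ : Measure ℂ}

lemma bdd_pow (hμ : ∀ᵐ z ∂μ, ‖z‖ = 1) (k : ℕ) : Bdd μ (fun z => z ^ k) := by
  refine ⟨(measurable_id.pow_const k).aestronglyMeasurable, 1, ?_⟩
  filter_upwards [hμ] with z hz
  simp [map_pow, hz]

lemma bdd_inv_pow (hμ : ∀ᵐ z ∂μ, ‖z‖ = 1) (k : ℕ) :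
    Bdd μ (fun z => (z ^ k)⁻¹) := by
  refine ⟨((measurable_id.pow_const k).inv).aestronglyMeasurable, 1, ?_⟩
  filter_upwards [hμ] with z hz
  simp [map_pow, hz]

lemma bdd_cosL (hμ : ∀ᵐ z ∂μ, ‖z‖ = 1) (k : ℕ) : Bdd μ (cosL k) := by
  have h := (((bdd_pow hμ k).add (bdd_inv_pow hμ k)).const_mul (2⁻¹ : ℂ))
  exact h.congr (ae_of_all _ fun z => by simp [cosL]; ring)

lemma bdd_sinL (hμ : ∀ᵐ z ∂μ, ‖z‖ = 1) (k : ℕ) : Bdd μ (sinL k) := by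
  have h := (((bdd_pow hμ k).sub (bdd_inv_pow hμ k)).const_mul ((2 * I)⁻¹ : ℂ))
  exact h.congr (ae_of_all _ fun z => by simp only [sinL]; ring)

/-- Membership (for `z ≠ 0`) in the span of `cosL k, sinL k` for `k < m`. -/
def InSpan (m : ℕ) (F : ℂ → ℂ) : Prop :=
  ∃ γ δ : ℕ → ℂ, ∀ z : ℂ, z ≠ 0 →
    F z = ∑ k ∈ Finset.range m, (γ k * cosL k z + δ k * sinL k z)

namespace InSpan

variable {m : ℕ} {F G : ℂ → ℂ}

lemma congr (h : InSpan m F) (he : ∀ z : ℂ, z ≠ 0 → F z = G z) : InSpan m G := by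
  obtain ⟨γ, δ, hr⟩ := h
  exact ⟨γ, δ, fun z hz => (he z hz) ▸ hr z hz⟩

lemma add (hF : InSpan m F) (hG : InSpan m G) : InSpan m (fun z => F z + G z) := by
  obtain ⟨γ1, δ1, h1⟩ := hF
  obtain ⟨γ2, δ2, h2⟩ := hG
  refine ⟨fun k => γ1 k + γ2 k, fun k => δ1 k + δ2 k, fun z hz => ?_⟩
  dsimp only
  rw [h1 z hz, h2 z hz, ← Finset.sum_add_distrib]
  exact Finset.sum_congr rfl fun k _ => by ring

lemma const_mul (hF : InSpan m F) (c : ℂ) : InSpan m (fun z => c * F z) := by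
  obtain ⟨γ, δ, h⟩ := hF
  refine ⟨fun k => c * γ k, fun k => c * δ k, fun z hz => ?_⟩
  dsimp only
  rw [h z hz, Finset.mul_sum]
  exact Finset.sum_congr rfl fun k _ => by ring

lemma neg (hF : InSpan m F) : InSpan m (fun z => -F z) :=
  (hF.const_mul (-1)).congr (fun z _ => by ring)

lemma sub (hF : InSpan m F) (hG : InSpan m G) : InSpan m (fun z => F z - G z) :=
  (hF.add hG.neg).congr (fun z _ => by ring)

lemma zero : InSpan m (fun _ : ℂ => (0 : ℂ)) :=
  ⟨fun _ => 0, fun _ => 0, fun z _ => by simp⟩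

lemma finsetSum {ι : Type*} {s : Finset ι} {F : ι → ℂ → ℂ}
    (h : ∀ i ∈ s, InSpan m (F i)) : InSpan m (fun z => ∑ i ∈ s, F i z) := by
  classical
  induction s using Finset.cons_induction with
  | empty => simpa using zero
  | cons i s his ih =>
      simp only [Finset.sum_cons]
      exact (h i (Finset.mem_cons_self i s)).add
        (ih fun j hj => h j (Finset.mem_cons_of_mem hj))

lemma bdd (hμ : ∀ᵐ z ∂μ, ‖z‖ = 1) (h : InSpan m F) : Bdd μ F := by
  obtain ⟨γ, δ, hr⟩ := h
  have hB : Bdd μ (fun z => ∑ k ∈ Finset.range m, (γ k * cosL k z + δ k * sinL k z)) :=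
    Bdd.finsetSum fun k _ => ((bdd_cosL hμ k).const_mul (γ k)).add
      ((bdd_sinL hμ k).const_mul (δ k))
  refine hB.congr ?_
  filter_upwards [hμ] with z hz
  exact (hr z (fun h0 => by simp [h0] at hz)).symm

end InSpan

lemma inSpan_cosL {m j : ℕ} (hj : j < m) : InSpan m (cosL j) := by
  refine ⟨fun k => if k = j then 1 else 0, fun _ => 0, fun z hz => ?_⟩
  rw [Finset.sum_eq_single j]
  · simp
  · intro k _ hk; simp [hk]
  · intro hjm; exact absurd (Finset.mem_range.mpr hj) hjm

lemma inSpan_sinL {m j : ℕ} (hj : j < m) : InSpan m (sinL j) := by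
  refine ⟨fun _ => 0, fun k => if k = j then 1 else 0, fun z hz => ?_⟩
  rw [Finset.sum_eq_single j]
  · simp
  · intro k _ hk; simp [hk]
  · intro hjm; exact absurd (Finset.mem_range.mpr hj) hjm

lemma inSpan_pow {m j : ℕ} (hj : j < m) : InSpan m (fun z => z ^ j) := by
  refine ⟨fun k => if k = j then 1 else 0, fun k => if k = j then I else 0, fun z hz => ?_⟩
  rw [Finset.sum_eq_single j]
  · dsimp only
    rw [if_pos rfl, if_pos rfl, one_mul, ← cos_add_I_sin j hz]
  · intro k _ hk; simp [hk]
  · intro hjm; exact absurd (Finset.mem_range.mpr hj) hjm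

lemma inSpan_inv_pow {m j : ℕ} (hj : j < m) : InSpan m (fun z => (z ^ j)⁻¹) := by
  refine ⟨fun k => if k = j then 1 else 0, fun k => if k = j then -I else 0, fun z hz => ?_⟩
  rw [Finset.sum_eq_single j]
  · dsimp only
    rw [if_pos rfl, if_pos rfl, one_mul, ← cos_sub_I_sin j hz]
    ring
  · intro k _ hk; simp [hk]
  · intro hjm; exact absurd (Finset.mem_range.mpr hj) hjm

/-- Workhorse: if `F` is bounded and orthogonal (w.r.t. the bilinear pairing) to all
`cosL k, sinL k` with `k < m`, then its pairing with anything in their span vanishes. -/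
lemma integral_mul_inSpan_eq_zero {μ : Measure ℂ} [IsFiniteMeasure μ]
    (hμ : ∀ᵐ z ∂μ, ‖z‖ = 1) {F K : ℂ → ℂ} {m : ℕ}
    (hF : Bdd μ F) (hK : InSpan m K)
    (horth : ∀ k < m, (∫ z, F z * cosL k z ∂μ) = 0 ∧ (∫ z, F z * sinL k z ∂μ) = 0) :
    ∫ z, F z * K z ∂μ = 0 := by
  obtain ⟨γ, δ, hr⟩ := hK
  have hae : (fun z => F z * K z) =ᵐ[μ]
      fun z => ∑ k ∈ Finset.range m, (γ k * (F z * cosL k z) + δ k * (F z * sinL k z)) := by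
    filter_upwards [hμ] with z hz
    rw [hr z (fun h0 => by simp [h0] at hz), Finset.mul_sum]
    exact Finset.sum_congr rfl fun k _ => by ring
  rw [integral_congr_ae hae, integral_finset_sum]
  · refine Finset.sum_eq_zero fun k hk => ?_
    have hk' := Finset.mem_range.mp hk
    rw [integral_add, integral_const_mul, integral_const_mul,
      (horth k hk').1, (horth k hk').2]
    · ring
    · exact ((hF.mul (bdd_cosL hμ k)).const_mul (γ k)).integrable
    · exact ((hF.mul (bdd_sinL hμ k)).const_mul (δ k)).integrable
  · intro k _
    exact (((hF.mul (bdd_cosL hμ k)).const_mul (γ k)).add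
      ((hF.mul (bdd_sinL hμ k)).const_mul (δ k))).integrable

end Helpers


/-- A nontrivial probability measure `μ` on the unit circle (infinite support), together
with the data produced by the Gram–Schmidt procedure applied (w.r.t. `⟨·,·⟩_R`) to the
ordered trigonometric system `{1, sin θ, cos θ, …, sin nθ, cos nθ, …}` (written as
Laurent polynomials via `sin nθ = (z^n - z^(-n))/(2i)`, `cos nθ = (z^n + z^(-n))/2`):
`b n * pii n` is `sin nθ` minus its orthogonal projection onto the span of the previous
elements; `a n * sig n` is `cos nθ` minus its orthogonal projection onto the span of the
previous elements (including `sin nθ`); `a n, b n > 0` are the corresponding norms, so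
that `sig n`, `pii n` are the orthonormal trigonometric polynomials; and
`β n = ⟨cos nθ, (b n)⁻¹ pii n⟩_R`.  Conventions: `sig 0 = 1`, `pii 0 = 0`, `β 0 = 0`,
`a 0 = b 0 = 1`. -/
structure OTP where
  μ : Measure ℂ
  prob : IsProbabilityMeasure μ
  circ : μ {z : ℂ | ‖z‖ = 1}ᶜ = 0
  nontriv : ∀ s : Finset ℂ, μ ((s : Set ℂ))ᶜ ≠ 0
  a : ℕ → ℝ
  b : ℕ → ℝ
  β : ℕ → ℝ
  sig : ℕ → ℂ → ℂ
  pii : ℕ → ℂ → ℂ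
  ha : ∀ n, 0 < a n
  hb : ∀ n, 0 < b n
  a_zero : a 0 = 1
  b_zero : b 0 = 1
  β_zero : β 0 = 0
  sig_zero : ∀ z, sig 0 z = 1
  pii_zero : ∀ z, pii 0 z = 0
  pii_span : ∀ n, 1 ≤ n → ∃ c d : ℕ → ℝ, ∀ z : ℂ, z ≠ 0 →
    (b n : ℂ) * pii n z =
      sinL n z + ∑ k ∈ Finset.range n, ((c k : ℂ) * cosL k z + (d k : ℂ) * sinL k z)
  pii_orth : ∀ n, 1 ≤ n → ∀ k < n,
    innR μ (fun z => (b n : ℂ) * pii n z) (cosL k) = 0 ∧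
    innR μ (fun z => (b n : ℂ) * pii n z) (sinL k) = 0
  b_norm : ∀ n, 1 ≤ n →
    ((b n : ℂ)) ^ 2 = innR μ (fun z => (b n : ℂ) * pii n z) (fun z => (b n : ℂ) * pii n z)
  sig_span : ∀ n, 1 ≤ n → ∃ c d : ℕ → ℝ, ∃ e : ℝ, ∀ z : ℂ, z ≠ 0 →
    (a n : ℂ) * sig n z =
      cosL n z + (e : ℂ) * sinL n z +
        ∑ k ∈ Finset.range n, ((c k : ℂ) * cosL k z + (d k : ℂ) * sinL k z)
  sig_orth : ∀ n, 1 ≤ n →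
    (∀ k < n,
      innR μ (fun z => (a n : ℂ) * sig n z) (cosL k) = 0 ∧
      innR μ (fun z => (a n : ℂ) * sig n z) (sinL k) = 0) ∧
    innR μ (fun z => (a n : ℂ) * sig n z) (sinL n) = 0
  a_norm : ∀ n, 1 ≤ n →
    ((a n : ℂ)) ^ 2 = innR μ (fun z => (a n : ℂ) * sig n z) (fun z => (a n : ℂ) * sig n z)
  β_def : ∀ n, 1 ≤ n →
    (β n : ℂ) = innR μ (cosL n) (fun z => ((b n : ℂ))⁻¹ * pii n z)

/-- The data of `OTP` together with the monic orthogonal polynomials on the unit circle: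
`Φ n` is the (unique) monic polynomial of degree `n` with
`∫ conj (τ^j) * Φ n τ dμ = 0` for all `j < n`, and `κ n = ‖Φ n‖⁻¹ > 0` where
`‖Φ n‖² = ∫ |Φ n τ|² dμ`. -/
structure OPUC extends OTP where
  Φ : ℕ → Polynomial ℂ
  Φ_monic : ∀ n, (Φ n).Monic
  Φ_deg : ∀ n, (Φ n).natDegree = n
  Φ_orth : ∀ n, ∀ j < n, ∫ τ, (starRingEnd ℂ) (τ ^ j) * (Φ n).eval τ ∂μ = 0
  κ : ℕ → ℝ
  κ_pos : ∀ n, 0 < κ n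
  κ_def : ∀ n, (κ n) ^ 2 * ∫ τ, ‖(Φ n).eval τ‖ ^ 2 ∂μ = 1

/-- For `n ≥ 1`, `κ_{2n-1}² = [a_n² + b_n²(1 + β_n²)]⁻¹`. -/
theorem kappa_odd_sq (D : OPUC) (n : ℕ) (hn : 1 ≤ n) :
    (D.κ (2 * n - 1)) ^ 2 = ((D.a n) ^ 2 + (D.b n) ^ 2 * (1 + (D.β n) ^ 2))⁻¹ := by
  classical
  haveI : IsProbabilityMeasure D.μ := D.prob
  set μ := D.μ with hmudef
  have hμ : ∀ᵐ z ∂μ, ‖z‖ = 1 := by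
    rw [ae_iff]; exact D.circ
  have hz0 : ∀ᵐ z ∂μ, (z : ℂ) ≠ 0 := by
    filter_upwards [hμ] with z hz h0
    rw [h0] at hz; simp at hz
  set m := 2 * n - 1 with hm
  set a := D.a n with hadef
  set b := D.b n with hbdef
  set β := D.β n with hbetadef
  have ha : (0:ℝ) < a := D.ha n
  have hb : (0:ℝ) < b := D.hb n
  have hbne : (b : ℂ) ≠ 0 := by exact_mod_cast hb.ne'
  set Fs : ℂ → ℂ := fun z => (a : ℂ) * D.sig n z with hFsdef
  set Fp : ℂ → ℂ := fun z => (b : ℂ) * D.pii n z with hFpdef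
  obtain ⟨c1, d1, e, hFs⟩ := D.sig_span n hn
  obtain ⟨c2, d2, hFp⟩ := D.pii_span n hn
  replace hFs : ∀ z : ℂ, z ≠ 0 → Fs z = cosL n z + (e:ℂ) * sinL n z
      + ∑ k ∈ Finset.range n, ((c1 k : ℂ) * cosL k z + (d1 k : ℂ) * sinL k z) := hFs
  replace hFp : ∀ z : ℂ, z ≠ 0 → Fp z = sinL n z
      + ∑ k ∈ Finset.range n, ((c2 k : ℂ) * cosL k z + (d2 k : ℂ) * sinL k z) := hFp
  -- span facts
  have hL1span : InSpan n (fun z => ∑ k ∈ Finset.range n,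
      ((c1 k : ℂ) * cosL k z + (d1 k : ℂ) * sinL k z)) :=
    ⟨fun k => (c1 k : ℂ), fun k => (d1 k : ℂ), fun z _ => rfl⟩
  have hL2span : InSpan n (fun z => ∑ k ∈ Finset.range n,
      ((c2 k : ℂ) * cosL k z + (d2 k : ℂ) * sinL k z)) :=
    ⟨fun k => (c2 k : ℂ), fun k => (d2 k : ℂ), fun z _ => rfl⟩
  have hFs_span : InSpan (n+1) Fs := by
    refine (((inSpan_cosL (Nat.lt_succ_self n)).add
      ((inSpan_sinL (Nat.lt_succ_self n)).const_mul (e : ℂ))).add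
      (InSpan.finsetSum (s := Finset.range n) fun k hk =>
        ((inSpan_cosL (Nat.lt_succ_of_lt (Finset.mem_range.mp hk))).const_mul ((c1 k : ℂ))).add
        ((inSpan_sinL (Nat.lt_succ_of_lt (Finset.mem_range.mp hk))).const_mul ((d1 k : ℂ))))).congr
      (fun z hz => ?_)
    exact (hFs z hz).symm
  have hFp_span : InSpan (n+1) Fp := by
    refine ((inSpan_sinL (Nat.lt_succ_self n)).add
      (InSpan.finsetSum (s := Finset.range n) fun k hk =>
        ((inSpan_cosL (Nat.lt_succ_of_lt (Finset.mem_range.mp hk))).const_mul ((c2 k : ℂ))).add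
        ((inSpan_sinL (Nat.lt_succ_of_lt (Finset.mem_range.mp hk))).const_mul ((d2 k : ℂ))))).congr
      (fun z hz => ?_)
    exact (hFp z hz).symm
  have hKp : InSpan n (fun z => Fp z - sinL n z) := by
    refine hL2span.congr fun z hz => ?_
    rw [hFp z hz]; ring
  have bFs : Bdd μ Fs := hFs_span.bdd hμ
  have bFp : Bdd μ Fp := hFp_span.bdd hμ
  -- orthogonality facts
  have horthFp : ∀ k < n, (∫ z, Fp z * cosL k z ∂μ) = 0 ∧ (∫ z, Fp z * sinL k z ∂μ) = 0 :=
    fun k hk => D.pii_orth n hn k hk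
  have horthFs : ∀ k < n, (∫ z, Fs z * cosL k z ∂μ) = 0 ∧ (∫ z, Fs z * sinL k z ∂μ) = 0 :=
    fun k hk => (D.sig_orth n hn).1 k hk
  have hFsSinN : ∫ z, Fs z * sinL n z ∂μ = 0 := (D.sig_orth n hn).2
  have hnFs : ((a:ℂ))^2 = ∫ z, Fs z * Fs z ∂μ := D.a_norm n hn
  have hnFp : ((b:ℂ))^2 = ∫ z, Fp z * Fp z ∂μ := D.b_norm n hn
  -- ⟨Fs, Fp⟩ = 0
  have hFsFp : ∫ z, Fs z * Fp z ∂μ = 0 := by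
    have h1 : (fun z => Fs z * sinL n z) =ᵐ[μ]
        fun z => Fs z * Fp z - Fs z * (Fp z - sinL n z) := ae_of_all _ fun z => by ring
    rw [integral_congr_ae h1, integral_sub (bFs.mul bFp).integrable
      (bFs.mul (bFp.sub (bdd_sinL hμ n))).integrable,
      integral_mul_inSpan_eq_zero hμ bFs hKp horthFs, sub_zero] at hFsSinN
    exact hFsSinN
  -- ⟨cos n, Fp⟩ = b² β
  have hCosFp : ∫ z, cosL n z * Fp z ∂μ = (b:ℂ)^2 * (β:ℂ) := by
    have hβd : (β:ℂ) = ∫ z, cosL n z * ((b:ℂ)⁻¹ * D.pii n z) ∂μ := D.β_def n hn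
    have hpt : ∀ τ : ℂ, cosL n τ * ((b:ℂ)⁻¹ * D.pii n τ)
        = (b:ℂ)⁻¹ * ((b:ℂ)⁻¹ * (cosL n τ * Fp τ)) := by
      intro τ
      have h2 : Fp τ = (b:ℂ) * D.pii n τ := rfl
      rw [h2]
      field_simp
    rw [integral_congr_ae (ae_of_all _ hpt), integral_const_mul, integral_const_mul] at hβd
    rw [hβd]
    field_simp
  -- ⟨sin n, Fp⟩ = b²
  have hSinFp : ∫ z, sinL n z * Fp z ∂μ = (b:ℂ)^2 := by
    have h1 : (fun z => sinL n z * Fp z) =ᵐ[μ]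
        fun z => Fp z * Fp z - Fp z * (Fp z - sinL n z) := ae_of_all _ fun z => by ring
    rw [integral_congr_ae h1, integral_sub (bFp.mul bFp).integrable
      (bFp.mul (bFp.sub (bdd_sinL hμ n))).integrable,
      integral_mul_inSpan_eq_zero hμ bFp hKp horthFp, ← hnFp, sub_zero]
  -- e = -β
  have hae1 : (fun z => Fs z * Fp z) =ᵐ[μ] fun z => cosL n z * Fp z + (e:ℂ) * (sinL n z * Fp z)
      + (∑ k ∈ Finset.range n, ((c1 k : ℂ) * cosL k z + (d1 k : ℂ) * sinL k z)) * Fp z := by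
    filter_upwards [hz0] with z hz
    rw [hFs z hz]; ring
  have hsum1 : ∫ z, Fs z * Fp z ∂μ = (b:ℂ)^2 * (β:ℂ) + (e:ℂ) * (b:ℂ)^2 := by
    have hL1Fp : ∫ z, (∑ k ∈ Finset.range n,
        ((c1 k : ℂ) * cosL k z + (d1 k : ℂ) * sinL k z)) * Fp z ∂μ = 0 := by
      rw [integral_congr_ae (ae_of_all μ fun z => mul_comm (∑ k ∈ Finset.range n,
        ((c1 k : ℂ) * cosL k z + (d1 k : ℂ) * sinL k z)) (Fp z))]
      exact integral_mul_inSpan_eq_zero hμ bFp hL1span horthFp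
    rw [integral_congr_ae hae1,
      integral_add (((bdd_cosL hμ n).mul bFp).add
          (((bdd_sinL hμ n).mul bFp).const_mul _)).integrable
        (((hL1span.bdd hμ).mul bFp).integrable),
      integral_add ((bdd_cosL hμ n).mul bFp).integrable
        ((((bdd_sinL hμ n).mul bFp).const_mul _).integrable),
      integral_const_mul, hCosFp, hSinFp, hL1Fp, add_zero]
  have he : (e : ℂ) = -(β : ℂ) := by
    have h2 : ((β:ℂ) + (e:ℂ)) * (b:ℂ)^2 = 0 := by
      rw [hFsFp] at hsum1
      linear_combination -hsum1
    have h3 := (mul_eq_zero.mp h2).resolve_right (pow_ne_zero 2 hbne)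
    linear_combination h3
  -- the OPUC side
  set P := D.Φ m with hPdef
  have hPdeg : P.natDegree = m := D.Φ_deg m
  have hPmon : P.Monic := D.Φ_monic m
  have hcm : P.coeff m = 1 := by rw [← hPdeg]; exact hPmon.coeff_natDegree
  set f : ℂ → ℂ := fun z => (z^(n-1))⁻¹ * P.eval z with hfdef
  have hev : ∀ z : ℂ, P.eval z = ∑ j ∈ Finset.range (m+1), P.coeff j * z ^ j := by
    intro z
    rw [Polynomial.eval_eq_sum_range, hPdeg]
  have bP : Bdd μ (fun z => P.eval z) := by
    have h1 : Bdd μ (fun z => ∑ j ∈ Finset.range (m+1), P.coeff j * z ^ j) :=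
      Bdd.finsetSum fun j _ => (bdd_pow hμ j).const_mul _
    exact h1.congr (ae_of_all _ fun z => (hev z).symm)
  have bf : Bdd μ f := (bdd_inv_pow hμ (n-1)).mul bP
  -- moments
  have hmom : ∀ t : ℕ, t < m → ∫ z, (starRingEnd ℂ) (z^t) * P.eval z ∂μ = 0 :=
    fun t ht => D.Φ_orth m t ht
  have hfzk : ∀ k, k < n → ∫ z, f z * z^k ∂μ = 0 := by
    intro k hk
    have heq : (fun z => f z * z^k) =ᵐ[μ]
        fun z => (starRingEnd ℂ) (z^(n-1-k)) * P.eval z := by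
      filter_upwards [hμ] with z hz
      have hzne : z ≠ 0 := fun h0 => by simp [h0] at hz
      have habs : ‖z^(n-1-k)‖ = 1 := by rw [norm_pow, hz, one_pow]
      have hc : (starRingEnd ℂ) (z^(n-1-k)) = (z^(n-1-k))⁻¹ :=
        (Complex.inv_eq_conj habs).symm
      have hp : z^(n-1) = z^(n-1-k) * z^k := by rw [← pow_add]; congr 1; omega
      simp only [hfdef, hc]
      rw [hp, mul_inv]
      have hzk : (z:ℂ)^k ≠ 0 := pow_ne_zero _ hzne
      field_simp
    rw [integral_congr_ae heq]
    exact hmom _ (by omega)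
  have hfzk' : ∀ k, k < n → ∫ z, f z * (z^k)⁻¹ ∂μ = 0 := by
    intro k hk
    have heq : (fun z => f z * (z^k)⁻¹) =ᵐ[μ]
        fun z => (starRingEnd ℂ) (z^(n-1+k)) * P.eval z := by
      filter_upwards [hμ] with z hz
      have habs : ‖z^(n-1+k)‖ = 1 := by rw [norm_pow, hz, one_pow]
      have hc : (starRingEnd ℂ) (z^(n-1+k)) = (z^(n-1+k))⁻¹ :=
        (Complex.inv_eq_conj habs).symm
      have hp : z^(n-1+k) = z^(n-1) * z^k := by rw [← pow_add]
      simp only [hfdef, hc]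
      rw [hp, mul_inv]
      ring
    rw [integral_congr_ae heq]
    exact hmom _ (by omega)
  have horthf : ∀ k < n, (∫ z, f z * cosL k z ∂μ) = 0 ∧ (∫ z, f z * sinL k z ∂μ) = 0 := by
    intro k hk
    constructor
    · have h1 : (fun z => f z * cosL k z)
          = fun z => (2⁻¹:ℂ) * (f z * z^k) + (2⁻¹:ℂ) * (f z * (z^k)⁻¹) := by
        funext z
        rw [cosL]
        ring
      rw [h1, integral_add ((bf.mul (bdd_pow hμ k)).const_mul _).integrable
        ((bf.mul (bdd_inv_pow hμ k)).const_mul _).integrable,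
        integral_const_mul, integral_const_mul, hfzk k hk, hfzk' k hk]
      ring
    · have h1 : (fun z => f z * sinL k z)
          = fun z => ((2*I)⁻¹:ℂ) * (f z * z^k) + (-(2*I)⁻¹:ℂ) * (f z * (z^k)⁻¹) := by
        funext z
        rw [sinL]
        ring
      rw [h1, integral_add ((bf.mul (bdd_pow hμ k)).const_mul _).integrable
        ((bf.mul (bdd_inv_pow hμ k)).const_mul _).integrable,
        integral_const_mul, integral_const_mul, hfzk k hk, hfzk' k hk]
      ring
  -- g and h
  set g : ℂ → ℂ := fun z => Fs z + ((β:ℂ) + I) * Fp z with hgdef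
  have bg : Bdd μ g := bFs.add (bFp.const_mul _)
  have horthg : ∀ k < n, (∫ z, g z * cosL k z ∂μ) = 0 ∧ (∫ z, g z * sinL k z ∂μ) = 0 := by
    intro k hk
    constructor
    · have h1 : (fun z => g z * cosL k z)
          = fun z => Fs z * cosL k z + ((β:ℂ)+I) * (Fp z * cosL k z) := by
        funext z; simp only [hgdef]; ring
      rw [h1, integral_add ((bFs.mul (bdd_cosL hμ k)).integrable)
        (((bFp.mul (bdd_cosL hμ k)).const_mul _).integrable),
        integral_const_mul, (horthFs k hk).1, (horthFp k hk).1]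
      ring
    · have h1 : (fun z => g z * sinL k z)
          = fun z => Fs z * sinL k z + ((β:ℂ)+I) * (Fp z * sinL k z) := by
        funext z; simp only [hgdef]; ring
      rw [h1, integral_add ((bFs.mul (bdd_sinL hμ k)).integrable)
        (((bFp.mul (bdd_sinL hμ k)).const_mul _).integrable),
        integral_const_mul, (horthFs k hk).2, (horthFp k hk).2]
      ring
  set hfun : ℂ → ℂ := fun z => f z - g z with hhdef
  have bh : Bdd μ hfun := bf.sub bg
  have horthh : ∀ k < n, (∫ z, hfun z * cosL k z ∂μ) = 0 ∧ (∫ z, hfun z * sinL k z ∂μ) = 0 := by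
    intro k hk
    constructor
    · have h1 : (fun z => hfun z * cosL k z)
          = fun z => f z * cosL k z - g z * cosL k z := by
        funext z; simp only [hhdef]; ring
      rw [h1, integral_sub (bf.mul (bdd_cosL hμ k)).integrable
        (bg.mul (bdd_cosL hμ k)).integrable, (horthf k hk).1, (horthg k hk).1, sub_zero]
    · have h1 : (fun z => hfun z * sinL k z)
          = fun z => f z * sinL k z - g z * sinL k z := by
        funext z; simp only [hhdef]; ring
      rw [h1, integral_sub (bf.mul (bdd_sinL hμ k)).integrable
        (bg.mul (bdd_sinL hμ k)).integrable, (horthf k hk).2, (horthg k hk).2, sub_zero]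
  -- span of f - z^n
  have hspan_f : InSpan n (fun z => f z - z^n) := by
    refine (InSpan.finsetSum (s := Finset.range m)
      (F := fun j => fun z => P.coeff j * ((z^(n-1))⁻¹ * z^j)) fun j hj => ?_).congr
      (fun z hz => ?_)
    · have hjm : j < m := Finset.mem_range.mp hj
      refine InSpan.const_mul ?_ _
      by_cases hjn : n - 1 ≤ j
      · refine (inSpan_pow (show j - (n-1) < n by omega)).congr fun z hz => ?_
        have hp : z^j = z^(n-1) * z^(j-(n-1)) := by rw [← pow_add]; congr 1; omega
        rw [hp]
        have h2 : (z:ℂ)^(n-1) ≠ 0 := pow_ne_zero _ hz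
        field_simp
      · refine (inSpan_inv_pow (show n - 1 - j < n by omega)).congr fun z hz => ?_
        have hp : z^(n-1) = z^(n-1-j) * z^j := by rw [← pow_add]; congr 1; omega
        rw [hp, mul_inv]
        have h2 : (z:ℂ)^j ≠ 0 := pow_ne_zero _ hz
        field_simp
    · have hzm : (z^(n-1))⁻¹ * z^m = z^n := by
        have hp : z^m = z^(n-1) * z^n := by rw [← pow_add]; congr 1; omega
        rw [hp]
        have h2 : (z:ℂ)^(n-1) ≠ 0 := pow_ne_zero _ hz
        field_simp
      simp only [hfdef]
      rw [hev z, Finset.sum_range_succ, hcm, one_mul, mul_add, hzm, add_sub_cancel_right,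
        Finset.mul_sum]
      exact Finset.sum_congr rfl fun j _ => by ring
  -- span of g - z^n
  have hspan_g : InSpan n (fun z => g z - z^n) := by
    refine (hL1span.add (hL2span.const_mul ((β:ℂ) + I))).congr fun z hz => ?_
    simp only [hgdef]
    rw [hFs z hz, hFp z hz, he, ← cos_add_I_sin n hz]
    ring
  have hspan_h : InSpan n hfun := by
    refine (hspan_f.sub hspan_g).congr fun z hz => ?_
    simp only [hhdef]
    ring
  -- h = 0 a.e.
  have hh0 : ∫ z, hfun z * (starRingEnd ℂ) (hfun z) ∂μ = 0 := by
    obtain ⟨γ, δ, hrep⟩ := hspan_h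
    have hH'span : InSpan n (fun z => ∑ k ∈ Finset.range n,
        ((starRingEnd ℂ) (γ k) * cosL k z + (starRingEnd ℂ) (δ k) * sinL k z)) :=
      ⟨_, _, fun z _ => rfl⟩
    have hae2 : (fun z => hfun z * (starRingEnd ℂ) (hfun z)) =ᵐ[μ]
        fun z => hfun z * (∑ k ∈ Finset.range n,
          ((starRingEnd ℂ) (γ k) * cosL k z + (starRingEnd ℂ) (δ k) * sinL k z)) := by
      filter_upwards [hμ] with z hz
      have hzne : z ≠ 0 := fun h0 => by simp [h0] at hz
      congr 1
      rw [hrep z hzne, map_sum]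
      exact Finset.sum_congr rfl fun k _ => by
        rw [map_add, map_mul, map_mul, conj_cosL hz, conj_sinL hz]
    rw [integral_congr_ae hae2]
    exact integral_mul_inSpan_eq_zero hμ bh hH'span horthh
  have hhz : hfun =ᵐ[μ] 0 := by
    have hint : Integrable (fun z => hfun z * (starRingEnd ℂ) (hfun z)) μ :=
      (bh.mul bh.conj).integrable
    have hint2 : Integrable (fun z => Complex.normSq (hfun z)) μ :=
      hint.re.congr (ae_of_all _ fun z => by simp [Complex.mul_conj])
    have hre : ∫ z, Complex.normSq (hfun z) ∂μ = 0 := by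
      have h1 : ∫ z, Complex.normSq (hfun z) ∂μ
          = ∫ z, (hfun z * (starRingEnd ℂ) (hfun z)).re ∂μ := by
        refine integral_congr_ae (ae_of_all _ fun z => ?_)
        simp [Complex.mul_conj]
      have h2re : ∫ z, (hfun z * (starRingEnd ℂ) (hfun z)).re ∂μ
          = (∫ z, hfun z * (starRingEnd ℂ) (hfun z) ∂μ).re := integral_re hint
      rw [h1, h2re, hh0]
      simp
    have h2 := (integral_eq_zero_iff_of_nonneg
      (fun z => Complex.normSq_nonneg (hfun z)) hint2).mp hre
    filter_upwards [h2] with z hz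
    have h3 : Complex.normSq (hfun z) = 0 := hz
    simpa using Complex.normSq_eq_zero.mp h3
  have hfg : f =ᵐ[μ] g := by
    filter_upwards [hhz] with z hz
    have h1 : f z - g z = 0 := hz
    exact sub_eq_zero.mp h1
  -- reality of Fs, Fp
  have hconjFs : ∀ᵐ z ∂μ, (starRingEnd ℂ) (Fs z) = Fs z := by
    filter_upwards [hμ] with z hz
    have hzne : z ≠ 0 := fun h0 => by simp [h0] at hz
    rw [hFs z hzne]
    simp only [map_add, map_mul, map_sum, conj_cosL hz, conj_sinL hz, Complex.conj_ofReal]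
  have hconjFp : ∀ᵐ z ∂μ, (starRingEnd ℂ) (Fp z) = Fp z := by
    filter_upwards [hμ] with z hz
    have hzne : z ≠ 0 := fun h0 => by simp [h0] at hz
    rw [hFp z hzne]
    simp only [map_add, map_mul, map_sum, conj_cosL hz, conj_sinL hz, Complex.conj_ofReal]
  -- the norm of g
  have hgcg : ∫ z, g z * (starRingEnd ℂ) (g z) ∂μ = ((a:ℂ))^2 + ((β:ℂ)^2 + 1) * (b:ℂ)^2 := by
    have hae3 : (fun z => g z * (starRingEnd ℂ) (g z)) =ᵐ[μ]
        fun z => Fs z * Fs z + (2*(β:ℂ)) * (Fs z * Fp z) + ((β:ℂ)^2+1) * (Fp z * Fp z) := by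
      filter_upwards [hconjFs, hconjFp] with z h1 h2
      simp only [hgdef]
      rw [map_add, h1, map_mul, h2, map_add, Complex.conj_ofReal, Complex.conj_I]
      linear_combination (-(Fp z * Fp z)) * Complex.I_mul_I
    rw [integral_congr_ae hae3,
      integral_add ((bFs.mul bFs).add ((bFs.mul bFp).const_mul _)).integrable
        (((bFp.mul bFp).const_mul _).integrable),
      integral_add (bFs.mul bFs).integrable (((bFs.mul bFp).const_mul _).integrable),
      integral_const_mul, integral_const_mul, ← hnFs, ← hnFp, hFsFp]
    ring
  -- the integral of |Φ|²
  have hae4 : (fun z => ‖P.eval z‖^2) =ᵐ[μ]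
      fun z => (g z * (starRingEnd ℂ) (g z)).re := by
    filter_upwards [hμ, hfg] with z hz hfgz
    have h1 : ‖g z‖ = ‖P.eval z‖ := by
      rw [← hfgz]
      simp only [hfdef]
      rw [norm_mul, norm_inv, norm_pow, hz, one_pow, inv_one, one_mul]
    rw [Complex.mul_conj, Complex.ofReal_re, ← Complex.sq_norm, h1]
  have hPint : ∫ z, ‖P.eval z‖^2 ∂μ = a^2 + (β^2+1)*b^2 := by
    have hre2 : ∫ z, (g z * (starRingEnd ℂ) (g z)).re ∂μ
        = (∫ z, g z * (starRingEnd ℂ) (g z) ∂μ).re := integral_re (bg.mul bg.conj).integrable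
    rw [integral_congr_ae hae4, hre2, hgcg]
    have h1 : ((a:ℂ))^2 + ((β:ℂ)^2+1) * (b:ℂ)^2 = (((a^2 + (β^2+1)*b^2 : ℝ)) : ℂ) := by
      push_cast; ring
    rw [h1, Complex.ofReal_re]
  -- conclusion
  have hκ : (D.κ m)^2 * ∫ z, ‖P.eval z‖^2 ∂μ = 1 := D.κ_def m
  rw [hPint] at hκ
  have hX : (0:ℝ) < a^2 + b^2*(1+β^2) := by
    nlinarith [mul_pos ha ha, mul_pos hb hb, sq_nonneg β]
  have hXne : a^2 + b^2*(1+β^2) ≠ 0 := ne_of_gt hX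
  field_simp
  linear_combination hκ
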